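/- Let T be a finite tree rooted at a vertex r, let S be a dominating set of T, let A ⊆ a_1(S) be a set all of whose vertices have the same depth in T, let N be the set of vertices of N_1(S) having a neighbour in A, and let S' = (S \ A) ∪ N. Assume further that S' is a dominating set of T and that every vertex of N is a child of some vertex in A. Then (iii) no vertex of N is adjacent to any other vertex of S', and hence N ⊆ a(S'); and (iv) every vertex x ∈ a(S) that is supported in S' (i.e., x ∈ S' \ a(S')) is a grandchild of some vertex of N and its parent is not in S'. -/

import Mathlib

open scoped Classical

variable {V : Type*} [Fintype V] [DecidableEq V]

/-- `S` is a dominating set of `G`: every vertex is in `S` or adjacent to a vertex of `S`. -/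
def IsDomSet (G : SimpleGraph V) (S : Finset V) : Prop :=
  ∀ v : V, v ∈ S ∨ ∃ u ∈ S, G.Adj u v

/-- `S` is a minimal dominating set: it is dominating and no proper subset is dominating. -/
def MinimalDomSet (G : SimpleGraph V) (S : Finset V) : Prop :=
  IsDomSet G S ∧ ∀ T : Finset V, T ⊂ S → ¬ IsDomSet G T

/-- `d_i(G)`: the number of dominating sets of `G` of cardinality `i`. -/
noncomputable def domCount (G : SimpleGraph V) (i : ℕ) : ℕ :=
  (Finset.univ.filter fun S : Finset V => IsDomSet G S ∧ S.card = i).card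

/-- `a(S)`: the set of critical vertices of a dominating set `S`. -/
noncomputable def aSet (G : SimpleGraph V) (S : Finset V) : Finset V :=
  S.filter fun v => ¬ IsDomSet G (S.erase v)

/-- `a(G,i)`: the sum of `|a(S)|` over all dominating sets `S` of cardinality `i`. -/
noncomputable def aTotal (G : SimpleGraph V) (i : ℕ) : ℕ :=
  ∑ S ∈ Finset.univ.filter (fun S : Finset V => IsDomSet G S ∧ S.card = i), (aSet G S).card

/-- `γ(G)`: the minimum cardinality of a dominating set. -/
noncomputable def gamma (G : SimpleGraph V) : ℕ :=
  sInf {k | ∃ S : Finset V, IsDomSet G S ∧ S.card = k}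

/-- `Γ(G)`: the maximum cardinality of a minimal dominating set. -/
noncomputable def bigGamma (G : SimpleGraph V) : ℕ :=
  sSup {k | ∃ S : Finset V, MinimalDomSet G S ∧ S.card = k}

/-- The closed neighbourhood `N[v]` as a finset. -/
noncomputable def closedNbhd (G : SimpleGraph V) (v : V) : Finset V :=
  Finset.univ.filter fun u => u = v ∨ G.Adj v u

/-- `N_1(S)`: vertices outside `S` with exactly one closed neighbour in `S`. -/
noncomputable def N1Set (G : SimpleGraph V) (S : Finset V) : Finset V :=
  Finset.univ.filter fun v => v ∉ S ∧ (closedNbhd G v ∩ S).card = 1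

/-- `N_2(S)`: vertices outside `S` with at least two closed neighbours in `S`. -/
noncomputable def N2Set (G : SimpleGraph V) (S : Finset V) : Finset V :=
  Finset.univ.filter fun v => v ∉ S ∧ 2 ≤ (closedNbhd G v ∩ S).card

/-- `a_1(S)`: critical vertices whose closed neighbourhood meets `N_1(S)`. -/
noncomputable def a1Set (G : SimpleGraph V) (S : Finset V) : Finset V :=
  (aSet G S).filter fun v => (closedNbhd G v ∩ N1Set G S).Nonempty

/-- `a_2(S)`: critical vertices whose closed neighbourhood misses `N_1(S)`. -/
noncomputable def a2Set (G : SimpleGraph V) (S : Finset V) : Finset V :=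
  (aSet G S).filter fun v => closedNbhd G v ∩ N1Set G S = ∅

/-- In the tree `G` rooted at `r`, `x` is a descendant of `y`:
`y` lies on the unique path from `x` to the root `r`. -/
def Descendant (G : SimpleGraph V) (r x y : V) : Prop :=
  G.dist x r = G.dist x y + G.dist y r

/-- `x` is a child of `y` in `G` rooted at `r`. -/
def IsChild (G : SimpleGraph V) (r x y : V) : Prop :=
  Descendant G r x y ∧ G.dist y x = 1

/-- `p` is the parent of `x` in `G` rooted at `r`. -/
def IsParent (G : SimpleGraph V) (r p x : V) : Prop :=
  IsChild G r x p

/-- `x` is a grandchild of `y` in `G` rooted at `r`. -/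
def IsGrandchild (G : SimpleGraph V) (r x y : V) : Prop :=
  Descendant G r x y ∧ G.dist y x = 2

set_option linter.unusedSectionVars false

lemma dist_add_dist_le_length {G : SimpleGraph V} {u v w : V} (p : G.Walk u v)
    (hw : w ∈ p.support) : G.dist u w + G.dist w v ≤ p.length := by
  calc G.dist u w + G.dist w v
      ≤ (p.takeUntil w hw).length + (p.dropUntil w hw).length :=
        Nat.add_le_add (SimpleGraph.dist_le _) (SimpleGraph.dist_le _)
    _ = p.length := by rw [← SimpleGraph.Walk.length_append, SimpleGraph.Walk.take_spec]

lemma tree_adj_dist {G : SimpleGraph V} (hT : G.IsTree) (r : V) {u v : V} (h : G.Adj u v) :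
    G.dist r v = G.dist r u + 1 ∨ G.dist r u = G.dist r v + 1 := by
  have hconn := hT.isConnected
  have h1 : G.dist u v = 1 := SimpleGraph.dist_eq_one_iff_adj.2 h
  have h1' : G.dist v u = 1 := SimpleGraph.dist_eq_one_iff_adj.2 h.symm
  have t1 : G.dist r v ≤ G.dist r u + G.dist u v := hconn.dist_triangle
  have t2 : G.dist r u ≤ G.dist r v + G.dist v u := hconn.dist_triangle
  have hne : G.dist r u ≠ G.dist r v := by
    intro heq
    obtain ⟨p, hp⟩ := hconn.exists_walk_length_eq_dist u r
    have hpp : p.IsPath := p.isPath_of_length_eq_dist hp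
    have hcd : G.dist u r = G.dist r u := SimpleGraph.dist_comm ..
    have hv : v ∉ p.support := by
      intro hv
      have h2 := dist_add_dist_le_length p hv
      have hvr : G.dist v r = G.dist r v := SimpleGraph.dist_comm ..
      omega
    have hq : (SimpleGraph.Walk.cons h.symm p).IsPath := hpp.cons hv
    obtain ⟨q, hql⟩ := hconn.exists_walk_length_eq_dist v r
    have hqp : q.IsPath := q.isPath_of_length_eq_dist hql
    have heqw := (hT.existsUnique_path v r).unique hq hqp
    have : (SimpleGraph.Walk.cons h.symm p).length = q.length := by rw [heqw]
    rw [SimpleGraph.Walk.length_cons, hp, hql] at this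
    have hvr : G.dist v r = G.dist r v := SimpleGraph.dist_comm ..
    omega
  omega

lemma tree_parent_eq_getVert {G : SimpleGraph V} (hT : G.IsTree) {r x y : V}
    (h : G.Adj x y) (hd : G.dist r x = G.dist r y + 1) :
    ∀ P : G.Walk x r, P.IsPath → y = P.getVert 1 := by
  intro P hP
  have hconn := hT.isConnected
  obtain ⟨p, hp⟩ := hconn.exists_walk_length_eq_dist y r
  have hpp : p.IsPath := p.isPath_of_length_eq_dist hp
  have hyr : G.dist y r = G.dist r y := SimpleGraph.dist_comm ..
  have hxr : G.dist x r = G.dist r x := SimpleGraph.dist_comm ..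
  have hx : x ∉ p.support := by
    intro hx
    have h2 := dist_add_dist_le_length p hx
    have h3 : G.dist y x = 1 := SimpleGraph.dist_eq_one_iff_adj.2 h.symm
    omega
  have hq : (SimpleGraph.Walk.cons h p).IsPath := hpp.cons hx
  have heqw := (hT.existsUnique_path x r).unique hq hP
  rw [← heqw]
  exact (SimpleGraph.Walk.getVert_zero p).symm

lemma tree_parent_unique {G : SimpleGraph V} (hT : G.IsTree) {r x y y' : V}
    (h : G.Adj x y) (hd : G.dist r x = G.dist r y + 1)
    (h' : G.Adj x y') (hd' : G.dist r x = G.dist r y' + 1) : y = y' := by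
  obtain ⟨p, hp⟩ := hT.isConnected.exists_walk_length_eq_dist x r
  have hpp := p.isPath_of_length_eq_dist hp
  rw [tree_parent_eq_getVert hT h hd p hpp, tree_parent_eq_getVert hT h' hd' p hpp]

lemma pin_mem {G : SimpleGraph V} {S : Finset V} {v u : V}
    (hcard : (closedNbhd G v ∩ S).card = 1)
    (hu : u ∈ closedNbhd G v ∩ S) : ∀ w ∈ closedNbhd G v ∩ S, w = u := by
  obtain ⟨a, ha⟩ := Finset.card_eq_one.1 hcard
  intro w hw
  rw [ha, Finset.mem_singleton] at hu hw
  rw [hw, hu]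

lemma mem_closedNbhd {G : SimpleGraph V} {v u : V} :
    u ∈ closedNbhd G v ↔ u = v ∨ G.Adj v u := by simp [closedNbhd]

theorem move_a1_to_n1_part_iii_iv (G : SimpleGraph V) (hT : G.IsTree) (r : V)
    (S : Finset V) (hS : IsDomSet G S)
    (A : Finset V) (hA : A ⊆ a1Set G S)
    (hdepth : ∀ x ∈ A, ∀ y ∈ A, G.dist r x = G.dist r y)
    (N S' : Finset V)
    (hN : N = (N1Set G S).filter fun v => ∃ u ∈ A, G.Adj u v)
    (hS' : S' = (S \ A) ∪ N)
    (hS'dom : IsDomSet G S')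
    (hchild : ∀ v ∈ N, ∃ u ∈ A, IsChild G r v u) :
    ((∀ v ∈ N, ∀ u ∈ S', ¬ G.Adj v u) ∧ N ⊆ aSet G S') ∧
      ∀ x ∈ aSet G S, x ∈ S' \ aSet G S' →
        (∃ u ∈ N, IsGrandchild G r x u) ∧ ∀ p : V, IsParent G r p x → p ∉ S' := by
  subst hN hS'
  set N : Finset V := (N1Set G S).filter fun v => ∃ u ∈ A, G.Adj u v with hN
  set S' : Finset V := (S \ A) ∪ N with hS'
  have hconn := hT.isConnected
  have hAS : ∀ u ∈ A, u ∈ S := by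
    intro u hu
    exact (Finset.mem_filter.1 (Finset.mem_filter.1 (hA hu)).1).1
  -- facts about members of N
  have hNfact : ∀ v ∈ N, v ∉ S ∧ (closedNbhd G v ∩ S).card = 1 ∧ ∃ u ∈ A, G.Adj u v := by
    intro v hv
    obtain ⟨hv1, hv2⟩ := Finset.mem_filter.1 hv
    obtain ⟨-, h3, h4⟩ := Finset.mem_filter.1 hv1
    exact ⟨h3, h4, hv2⟩
  have childDepth : ∀ {c pa : V}, IsChild G r c pa → G.dist r c = G.dist r pa + 1 := by
    rintro c pa ⟨hdesc, hdist⟩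
    unfold Descendant at hdesc
    have h1 : G.dist c pa = G.dist pa c := SimpleGraph.dist_comm ..
    have h2 : G.dist c r = G.dist r c := SimpleGraph.dist_comm ..
    have h3 : G.dist pa r = G.dist r pa := SimpleGraph.dist_comm ..
    omega
  have childAdj : ∀ {c pa : V}, IsChild G r c pa → G.Adj pa c := by
    rintro c pa ⟨-, hdist⟩
    exact SimpleGraph.dist_eq_one_iff_adj.1 hdist
  have hNdepth : ∀ v ∈ N, ∀ w ∈ N, G.dist r v = G.dist r w := by
    intro v hv w hw
    obtain ⟨u, huA, hcu⟩ := hchild v hv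
    obtain ⟨u', hu'A, hcu'⟩ := hchild w hw
    have := childDepth hcu
    have := childDepth hcu'
    have := hdepth u huA u' hu'A
    omega
  -- Part (iii)
  have hiii : ∀ v ∈ N, ∀ u ∈ S', ¬ G.Adj v u := by
    intro v hv u hu hadj
    obtain ⟨hvS, hvcard, u₀, hu₀A, hadj₀⟩ := hNfact v hv
    have hu₀mem : u₀ ∈ closedNbhd G v ∩ S :=
      Finset.mem_inter.2 ⟨mem_closedNbhd.2 (Or.inr hadj₀.symm), hAS u₀ hu₀A⟩
    rcases Finset.mem_union.1 hu with h | h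
    · obtain ⟨huS, huA⟩ := Finset.mem_sdiff.1 h
      have : u = u₀ := pin_mem hvcard hu₀mem u
        (Finset.mem_inter.2 ⟨mem_closedNbhd.2 (Or.inr hadj), huS⟩)
      exact huA (this ▸ hu₀A)
    · have hd := hNdepth v hv u h
      rcases tree_adj_dist hT r hadj with h1 | h1 <;> omega
  have hNsub : N ⊆ aSet G S' := by
    intro v hv
    refine Finset.mem_filter.2 ⟨Finset.mem_union.2 (Or.inr hv), ?_⟩
    intro hdom
    rcases hdom v with h | ⟨u, hu, hadj⟩
    · exact (Finset.mem_erase.1 h).1 rfl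
    · exact hiii v hv u (Finset.mem_of_mem_erase hu) hadj.symm
  refine ⟨⟨hiii, hNsub⟩, ?_⟩
  -- Part (iv)
  intro x hx hx'
  obtain ⟨hxS, hxcrit⟩ := Finset.mem_filter.1 hx
  obtain ⟨hxS', hxna⟩ := Finset.mem_sdiff.1 hx'
  have hdom' : IsDomSet G (S'.erase x) := by
    by_contra hc
    exact hxna (Finset.mem_filter.2 ⟨hxS', hc⟩)
  have hxA : x ∉ A := by
    rcases Finset.mem_union.1 hxS' with h | h
    · exact (Finset.mem_sdiff.1 h).2
    · exact absurd hxS (hNfact x h).1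
  -- the private neighbour y of x w.r.t. S
  obtain ⟨y, hy⟩ : ∃ y, y ∉ S.erase x ∧ ∀ u ∈ S.erase x, ¬ G.Adj u y := by
    rw [IsDomSet] at hxcrit
    push_neg at hxcrit
    obtain ⟨y, h1, h2⟩ := hxcrit
    exact ⟨y, h1, fun u hu ha => (h2 u hu ha).elim⟩
  obtain ⟨hy1, hy2⟩ := hy
  have hpin : ∀ w ∈ S, (w = y ∨ G.Adj y w) → w = x := by
    intro w hwS hw
    by_contra hne
    have hwe : w ∈ S.erase x := Finset.mem_erase.2 ⟨hne, hwS⟩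
    rcases hw with h | h
    · exact hy1 (h ▸ hwe)
    · exact hy2 w hwe h.symm
  have hxy : y = x ∨ G.Adj y x := by
    rcases hS y with hyS | ⟨u, huS, hadj⟩
    · left
      by_contra hne
      exact hy1 (Finset.mem_erase.2 ⟨hne, hyS⟩)
    · right
      have := hpin u huS (Or.inr hadj.symm)
      exact (this ▸ hadj).symm
  -- find w ∈ N adjacent to y
  obtain ⟨w, hwN, hadj_wy⟩ : ∃ w ∈ N, G.Adj w y := by
    rcases hdom' y with h | ⟨w, hw, hadj⟩
    · exfalso
      have hyne : y ≠ x := (Finset.mem_erase.1 h).1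
      rcases Finset.mem_union.1 (Finset.mem_of_mem_erase h) with h' | h'
      · obtain ⟨hyS, -⟩ := Finset.mem_sdiff.1 h'
        exact hyne (hpin y hyS (Or.inl rfl))
      · obtain ⟨-, -, u, huA, hadj⟩ := hNfact y h'
        exact hxA ((hpin u (hAS u huA) (Or.inr hadj.symm)) ▸ huA)
    · have hwS' : w ∈ S' := Finset.mem_of_mem_erase hw
      have hwne : w ≠ x := (Finset.mem_erase.1 hw).1
      rcases Finset.mem_union.1 hwS' with h' | h'
      · obtain ⟨hwS, -⟩ := Finset.mem_sdiff.1 h'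
        exact absurd (hpin w hwS (Or.inr hadj.symm)) hwne
      · exact ⟨w, h', hadj⟩
  have hyx_ne : y ≠ x := by
    intro h
    subst h
    exact hiii w hwN y hxS' hadj_wy
  have hadj_yx : G.Adj y x := hxy.resolve_left hyx_ne
  have hyS : y ∉ S := by
    intro h
    exact hyx_ne (hpin y h (Or.inl rfl))
  -- depths
  obtain ⟨u, huA, hcu⟩ := hchild w hwN
  have hwdep : G.dist r w = G.dist r u + 1 := childDepth hcu
  have hydep : G.dist r y = G.dist r w + 1 := by
    rcases tree_adj_dist hT r hadj_wy with h | h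
    · exact h
    · exfalso
      have : y = u := tree_parent_unique hT hadj_wy h (childAdj hcu).symm hwdep
      exact hyS (this ▸ hAS u huA)
  have hxdep : G.dist r x = G.dist r y + 1 := by
    rcases tree_adj_dist hT r hadj_yx with h | h
    · exact h
    · exfalso
      have : x = w := tree_parent_unique hT hadj_yx h hadj_wy.symm hydep
      exact (hNfact w hwN).1 (this ▸ hxS)
  have hd_wy : G.dist w y = 1 := SimpleGraph.dist_eq_one_iff_adj.2 hadj_wy
  have hd_yx : G.dist y x = 1 := SimpleGraph.dist_eq_one_iff_adj.2 hadj_yx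
  have hwx2 : G.dist w x = 2 := by
    have t1 : G.dist w x ≤ G.dist w y + G.dist y x := hconn.dist_triangle
    have t2 : G.dist r x ≤ G.dist r w + G.dist w x := hconn.dist_triangle
    omega
  constructor
  · refine ⟨w, hwN, ?_, hwx2⟩
    unfold Descendant
    have h1 : G.dist x r = G.dist r x := SimpleGraph.dist_comm ..
    have h2 : G.dist w r = G.dist r w := SimpleGraph.dist_comm ..
    have h3 : G.dist x w = G.dist w x := SimpleGraph.dist_comm ..
    omega
  · intro p hp
    have hpadj : G.Adj p x := childAdj hp
    have hpdep : G.dist r x = G.dist r p + 1 := childDepth hp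
    have : p = y := tree_parent_unique hT hpadj.symm hpdep hadj_yx.symm hxdep
    subst this
    intro hpS'
    rcases Finset.mem_union.1 hpS' with h | h
    · exact hyS (Finset.mem_sdiff.1 h).1
    · obtain ⟨-, -, u', hu'A, hadj'⟩ := hNfact p h
      exact hxA ((hpin u' (hAS u' hu'A) (Or.inr hadj'.symm)) ▸ hu'A)
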